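/- arXiv:2510.22288 — 6 statements merged into one kernel-verified Lean document; each statement's English description precedes it below -/
import Mathlib

section
/- Fix ρ ∈ [0,1), M > 0, real numbers σ_Y, λ, Y ∈ ℝ, μ_Y > 0, and Z ≥ 0. Then the one-step cost Γ ↦ c_λ^ρ(Γ, M, Y, Z) := σ_Y + μ_Y·Z − λ·μ_Y − λ·Z + (Z + μ_Y)·(2Y + Z + H_ρ(Γ, M)) is strictly increasing in Γ on [0, ∞). -/
/-- The one-step cost
`c_λ^ρ(Γ, M, Y, Z) = σ_Y + μ_Y Z − λ μ_Y − λ Z + (Z + μ_Y)(2Y + Z + H_ρ(Γ, M))`,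
where `H_ρ(Γ, M) = Γ·(1 − ρ²Γ/(Γ + (1−ρ²)M))`, is strictly increasing in the age gap `Γ`
on `[0, ∞)`, for `ρ ∈ [0,1)`, `M > 0`, `μ_Y > 0` and `Z ≥ 0`. (Lemma 2, second claim.) -/
theorem one_step_cost_strictMonoOn (ρ M σY lam Y μY Z : ℝ)
    (hρ0 : 0 ≤ ρ) (hρ1 : ρ < 1) (hM : 0 < M) (hμY : 0 < μY) (hZ : 0 ≤ Z) :
    StrictMonoOn (fun Γ : ℝ => σY + μY * Z - lam * μY - lam * Z +
      (Z + μY) * (2 * Y + Z + Γ * (1 - ρ ^ 2 * Γ / (Γ + (1 - ρ ^ 2) * M))))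
      (Set.Ici (0 : ℝ)) := by
  intro a ha b hb hab
  simp only [Set.mem_Ici] at ha hb
  have hc : 0 < 1 - ρ ^ 2 := by nlinarith
  have hda : 0 < a + (1 - ρ ^ 2) * M := by nlinarith
  have hdb : 0 < b + (1 - ρ ^ 2) * M := by nlinarith
  have hZμ : 0 < Z + μY := by linarith
  have key : a * (1 - ρ ^ 2 * a / (a + (1 - ρ ^ 2) * M)) <
      b * (1 - ρ ^ 2 * b / (b + (1 - ρ ^ 2) * M)) := by
    have e : ∀ x : ℝ, 0 < x + (1 - ρ ^ 2) * M →
        x * (1 - ρ ^ 2 * x / (x + (1 - ρ ^ 2) * M)) =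
        ((1 - ρ ^ 2) * x ^ 2 + (1 - ρ ^ 2) * M * x) / (x + (1 - ρ ^ 2) * M) := by
      intro x hx
      field_simp
      ring
    rw [e a hda, e b hdb, div_lt_div_iff₀ hda hdb]
    have h1 : 0 < b - a := by linarith
    nlinarith [mul_pos (mul_pos h1 hc) (mul_pos hM hM),
      mul_nonneg (mul_nonneg h1.le hc.le) (mul_nonneg ha hb),
      mul_nonneg (mul_nonneg (mul_nonneg h1.le hc.le) (mul_nonneg hc.le hM.le)) (by linarith : (0:ℝ) ≤ a + b)]
  have := mul_lt_mul_of_pos_left (add_lt_add_left key (2 * Y + Z)) hZμ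
  dsimp only
  linarith
end

section
/- Let ℓ ∈ ℕ, let w : ℕ → ℝ be a sequence with w_k ≥ 0 for all k, and let b : ℕ → Bool be an arbitrary branch-indicator sequence. Suppose Γ, Γ' : ℕ → ℝ are sequences with Γ_k ≥ 0 for all k, satisfying: (i) Γ_k = Γ'_k for all k ≤ ℓ; (ii) Γ_{ℓ+1} = Γ_ℓ + w_ℓ and Γ'_{ℓ+1} = w_ℓ; and (iii) for every k ≥ ℓ+1, Γ_{k+1} = Γ_k + w_k if b_k = true and Γ_{k+1} = w_k if b_k = false, and likewise Γ'_{k+1} = Γ'_k + w_k if b_k = true and Γ'_{k+1} = w_k if b_k = false. Then Γ'_k ≤ Γ_k for all k ∈ ℕ. -/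
/-- Trajectory-comparison lemma underlying optimality of MAF scheduling
(Theorem 2 / Appendix B). Two age-gap trajectories `Γ` and `Γ'` share the same
interval lengths `w` and the same branch decisions `b`, agree up to epoch `ℓ`,
and at epoch `ℓ` the primed system resets (`Γ'_{ℓ+1} = w_ℓ`) while the unprimed
system grows (`Γ_{ℓ+1} = Γ_ℓ + w_ℓ`). Then `Γ'_k ≤ Γ_k` for all `k`. -/
theorem age_gap_trajectory_comparison (ℓ : ℕ) (w : ℕ → ℝ) (hw : ∀ k, 0 ≤ w k)
    (b : ℕ → Bool) (Γ Γ' : ℕ → ℝ) (hΓnonneg : ∀ k, 0 ≤ Γ k)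
    (hagree : ∀ k ≤ ℓ, Γ k = Γ' k)
    (hstep : Γ (ℓ + 1) = Γ ℓ + w ℓ) (hstep' : Γ' (ℓ + 1) = w ℓ)
    (hrec : ∀ k, ℓ + 1 ≤ k → Γ (k + 1) = if b k then Γ k + w k else w k)
    (hrec' : ∀ k, ℓ + 1 ≤ k → Γ' (k + 1) = if b k then Γ' k + w k else w k) :
    ∀ k, Γ' k ≤ Γ k := by
  intro k
  rcases le_or_gt k ℓ with h | h
  · exact (hagree k h).ge
  · -- k ≥ ℓ+1: strong induction
    obtain ⟨m, rfl⟩ : ∃ m, k = ℓ + 1 + m := ⟨k - (ℓ+1), by omega⟩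
    induction m with
    | zero =>
      simp only [Nat.add_zero]
      rw [hstep, hstep']
      have := hΓnonneg ℓ
      linarith
    | succ n ih =>
      have hn : ℓ + 1 ≤ ℓ + 1 + n := by omega
      have ih' := ih (by omega)
      have h1 := hrec (ℓ + 1 + n) hn
      have h2 := hrec' (ℓ + 1 + n) hn
      have : ℓ + 1 + (n + 1) = (ℓ + 1 + n) + 1 := by omega
      rw [this, h1, h2]
      cases b (ℓ + 1 + n) <;> simp <;> linarith
end

section
/- Let (Ω, F, P) be a probability space, ρ ∈ (0,1), and y_u, z_u > 0. Let (Y_n)_{n≥0} be an i.i.d. sequence of random variables with 0 ≤ Y_n ≤ y_u almost surely and μ := E[Y_0] > 0, and let (Z_n)_{n≥0} be arbitrary random variables with 0 ≤ Z_n ≤ z_u almost surely. Let M_0 > 0 and Γ_0 ∈ [0, y_u + z_u] be constants and define recursively M_{n+1} = M_n + Y_n + Z_n and Γ_{n+1} = Y_n + Z_n. Then lim_{n→∞} (1/n)·Σ_{i=0}^{n−1} E[(Z_i + μ)·ρ²Γ_i²/(Γ_i + (1−ρ²)M_i)] = 0. -/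
open MeasureTheory Filter ProbabilityTheory Topology

/-- Theorem 3 of the paper (average-cost equivalence of MDP 2 and MDP 3 under MAF
scheduling): with i.i.d. bounded delays `Y_n` of positive mean `μ`, arbitrary bounded
waiting times `Z_n`, envelope `M_{n+1} = M_n + Y_n + Z_n` and age gap
`Γ_{n+1} = Y_n + Z_n`, the Cesàro averages of
`E[(Z_i + μ)·ρ²Γ_i²/(Γ_i + (1−ρ²)M_i)]` tend to `0`. -/
theorem average_cost_mdp_equivalence {Ω : Type*} [MeasurableSpace Ω]
    (P : Measure Ω) [IsProbabilityMeasure P]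
    (ρ : ℝ) (hρ0 : 0 < ρ) (hρ1 : ρ < 1)
    (yu zu : ℝ) (hyu : 0 < yu) (hzu : 0 < zu)
    (Y Z : ℕ → Ω → ℝ)
    (hYmeas : ∀ n, Measurable (Y n)) (hZmeas : ∀ n, Measurable (Z n))
    (hYindep : iIndepFun Y P)
    (hYident : ∀ n, IdentDistrib (Y n) (Y 0) P P)
    (hYbound : ∀ n, ∀ᵐ ω ∂P, Y n ω ∈ Set.Icc (0 : ℝ) yu)
    (hZbound : ∀ n, ∀ᵐ ω ∂P, Z n ω ∈ Set.Icc (0 : ℝ) zu)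
    (μ : ℝ) (hμdef : μ = ∫ ω, Y 0 ω ∂P) (hμpos : 0 < μ)
    (M Γ : ℕ → Ω → ℝ)
    (M₀ Γ₀ : ℝ) (hM₀ : 0 < M₀) (hΓ₀ : Γ₀ ∈ Set.Icc (0 : ℝ) (yu + zu))
    (hM0 : ∀ ω, M 0 ω = M₀) (hΓ0 : ∀ ω, Γ 0 ω = Γ₀)
    (hMrec : ∀ n ω, M (n + 1) ω = M n ω + Y n ω + Z n ω)
    (hΓrec : ∀ n ω, Γ (n + 1) ω = Y n ω + Z n ω) :
    Tendsto (fun n : ℕ => (1 / (n : ℝ)) * ∑ i ∈ Finset.range n,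
        ∫ ω, (Z i ω + μ) * ρ ^ 2 * (Γ i ω) ^ 2 / (Γ i ω + (1 - ρ ^ 2) * M i ω) ∂P)
      atTop (nhds 0) := by
  have hρ2 : (0:ℝ) < 1 - ρ ^ 2 := by nlinarith
  -- notation
  set f : ℕ → Ω → ℝ := fun i ω =>
    (Z i ω + μ) * ρ ^ 2 * (Γ i ω) ^ 2 / (Γ i ω + (1 - ρ ^ 2) * M i ω) with hf
  set S : ℕ → Ω → ℝ := fun i ω => ∑ k ∈ Finset.range i, Y k ω with hS
  -- explicit formulas for M and Γ
  have hMeq : ∀ n ω, M n ω = M₀ + ∑ k ∈ Finset.range n, (Y k ω + Z k ω) := by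
    intro n
    induction n with
    | zero => intro ω; simp [hM0]
    | succ n ih =>
      intro ω
      rw [hMrec, ih ω, Finset.sum_range_succ]; ring
  have hΓmeas : ∀ n, Measurable (Γ n) := by
    intro n
    cases n with
    | zero =>
      have : Γ 0 = fun _ => Γ₀ := funext hΓ0
      rw [this]; exact measurable_const
    | succ n =>
      have : Γ (n+1) = fun ω => Y n ω + Z n ω := funext (hΓrec n)
      rw [this]; exact (hYmeas n).add (hZmeas n)
  have hMmeas : ∀ n, Measurable (M n) := by
    intro n
    have : M n = fun ω => M₀ + ∑ k ∈ Finset.range n, (Y k ω + Z k ω) :=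
      funext (hMeq n)
    rw [this]
    exact measurable_const.add (Finset.measurable_sum _ fun k _ =>
      (hYmeas k).add (hZmeas k))
  have hfmeas : ∀ i, Measurable (f i) := fun i =>
    ((((hZmeas i).add measurable_const).mul measurable_const).mul
      ((hΓmeas i).pow measurable_const)).div
      ((hΓmeas i).add (measurable_const.mul (hMmeas i)))
  -- good event : all bounds hold
  have hgood : ∀ᵐ ω ∂P, ∀ n, (Y n ω ∈ Set.Icc (0:ℝ) yu ∧ Z n ω ∈ Set.Icc (0:ℝ) zu) := by
    rw [ae_all_iff]
    exact fun n => (hYbound n).and (hZbound n)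
  -- strong law event
  have hYint : Integrable (Y 0) P := by
    refine ⟨(hYmeas 0).aestronglyMeasurable, ?_⟩
    apply HasFiniteIntegral.mono' (hasFiniteIntegral_const yu)
    filter_upwards [hYbound 0] with ω hω
    rw [Real.norm_eq_abs, abs_le]
    exact ⟨by linarith [hω.1], hω.2⟩
  have hslln : ∀ᵐ ω ∂P, Tendsto (fun n : ℕ => S n ω / n) atTop (𝓝 μ) := by
    have := strong_law_ae_real Y hYint
      (fun i j hij => hYindep.indepFun hij) hYident
    rw [hμdef]
    filter_upwards [this] with ω hω using hω
  -- constant bound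
  set C : ℝ := (zu + μ) * ρ ^ 2 * (yu + zu) ^ 2 / ((1 - ρ ^ 2) * M₀) with hC
  have hCpos : 0 < C := by
    apply div_pos (by positivity) (by positivity)
  -- a.e. pointwise facts
  have key : ∀ᵐ ω ∂P, (∀ i, |f i ω| ≤ C) ∧
      Tendsto (fun i => f i ω) atTop (𝓝 0) := by
    filter_upwards [hgood, hslln] with ω hω hlln
    -- bounds on Γ and S and M
    have hΓb : ∀ i, Γ i ω ∈ Set.Icc (0:ℝ) (yu + zu) := by
      intro i
      cases i with
      | zero => rw [hΓ0]; exact hΓ₀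
      | succ n =>
        rw [hΓrec]
        constructor
        · linarith [(hω n).1.1, (hω n).2.1]
        · linarith [(hω n).1.2, (hω n).2.2]
    have hSnn : ∀ i, 0 ≤ S i ω :=
      fun i => Finset.sum_nonneg fun k _ => (hω k).1.1
    have hMge : ∀ i, M₀ + S i ω ≤ M i ω := by
      intro i
      rw [hMeq]
      have : S i ω ≤ ∑ k ∈ Finset.range i, (Y k ω + Z k ω) :=
        Finset.sum_le_sum fun k _ => by linarith [(hω k).2.1]
      linarith
    have hden : ∀ i, (1 - ρ ^ 2) * (M₀ + S i ω) ≤ Γ i ω + (1 - ρ ^ 2) * M i ω := by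
      intro i
      have h1 := (hΓb i).1
      have h2 := hMge i
      nlinarith
    have hdenpos : ∀ i, 0 < Γ i ω + (1 - ρ ^ 2) * M i ω := by
      intro i
      have h0 : 0 < (1 - ρ ^ 2) * (M₀ + S i ω) :=
        mul_pos hρ2 (by linarith [hSnn i])
      linarith [hden i]
    have hnum_nn : ∀ i, 0 ≤ (Z i ω + μ) * ρ ^ 2 * (Γ i ω) ^ 2 := by
      intro i
      have := (hω i).2.1
      positivity
    have hnum_le : ∀ i, (Z i ω + μ) * ρ ^ 2 * (Γ i ω) ^ 2
        ≤ (zu + μ) * ρ ^ 2 * (yu + zu) ^ 2 := by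
      intro i
      have h1 := (hω i).2.1
      have h2 := (hω i).2.2
      have h3 := (hΓb i).1
      have h4 := (hΓb i).2
      have hg : (Γ i ω) ^ 2 ≤ (yu + zu) ^ 2 := pow_le_pow_left₀ h3 h4 2
      have ha : Z i ω + μ ≤ zu + μ := by linarith
      have := mul_le_mul (mul_le_mul ha (le_refl (ρ^2)) (by positivity) (by linarith))
        hg (sq_nonneg _) (by positivity)
      linarith
    have hfnn : ∀ i, 0 ≤ f i ω := fun i =>
      div_nonneg (hnum_nn i) (hdenpos i).le
    have hfub : ∀ i, f i ω ≤ (zu + μ) * ρ ^ 2 * (yu + zu) ^ 2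
        / ((1 - ρ ^ 2) * (M₀ + S i ω)) := by
      intro i
      exact div_le_div₀ (by positivity) (hnum_le i)
        (mul_pos hρ2 (by linarith [hSnn i])) (hden i)
    constructor
    · intro i
      rw [abs_of_nonneg (hfnn i)]
      refine (hfub i).trans ?_
      rw [hC]
      apply div_le_div_of_nonneg_left (by positivity) (by positivity)
      have := hSnn i
      nlinarith
    · -- S i ω → ∞
      have hStop : Tendsto (fun i => S i ω) atTop atTop := by
        have h1 : Tendsto (fun i : ℕ => (S i ω / i) * i) atTop atTop :=
          Tendsto.pos_mul_atTop hμpos hlln tendsto_natCast_atTop_atTop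
        apply h1.congr'
        filter_upwards [eventually_ge_atTop 1] with i hi
        have : (i:ℝ) ≠ 0 := by positivity
        field_simp
      have hub : Tendsto (fun i => (zu + μ) * ρ ^ 2 * (yu + zu) ^ 2
          / ((1 - ρ ^ 2) * (M₀ + S i ω))) atTop (𝓝 0) := by
        apply Tendsto.div_atTop tendsto_const_nhds
        apply Tendsto.const_mul_atTop hρ2
        exact tendsto_atTop_add_const_left _ _ hStop
      exact tendsto_of_tendsto_of_tendsto_of_le_of_le tendsto_const_nhds hub
        hfnn hfub
  -- Dominated convergence: ∫ f i → 0
  have hint : Tendsto (fun i => ∫ ω, f i ω ∂P) atTop (𝓝 0) := by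
    have := tendsto_integral_of_dominated_convergence (fun _ => C)
      (fun i => (hfmeas i).aestronglyMeasurable) (integrable_const C)
      (fun i => by filter_upwards [key] with ω hω using hω.1 i)
      (by filter_upwards [key] with ω hω using hω.2)
    simpa using this
  -- Cesàro average
  have := hint.cesaro
  simpa [one_div] using this
end

section
/- Let ρ ∈ [0,1) and 0 < t₁ < t₂ ≤ t. Let Σ := [[t₁, ρ·t₁], [ρ·t₁, t₂]]. Then Σ is invertible and the row vector [t₁, ρ·t₂] multiplied by Σ⁻¹ equals [G_{t,ρ}(Δ₁, Δ₂), Q_{t,ρ}(Δ₁, Δ₂)], where Δ₁ := t − t₁ and Δ₂ := t − t₂; equivalently, this row vector equals [(1−ρ²)t₂/(t₂ − ρ²t₁), ρ(t₂ − t₁)/(t₂ − ρ²t₁)]. -/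
open Matrix

/-- Fusion weights of the MMSE estimator (Theorem 1, stale-source case): for
`ρ ∈ [0,1)` and `0 < t₁ < t₂ ≤ t`, the covariance matrix
`Σ = [[t₁, ρ t₁], [ρ t₁, t₂]]` is invertible and
`[t₁, ρ t₂]·Σ⁻¹ = [G_{t,ρ}(Δ₁,Δ₂), Q_{t,ρ}(Δ₁,Δ₂)]` where `Δ₁ = t − t₁`,
`Δ₂ = t − t₂`, `G_{t,ρ}(x,y) = (1−ρ²)(t−y)/(t−y−ρ²(t−x))` and
`Q_{t,ρ}(x,y) = ρ(x−y)/(t−y−ρ²(t−x))`; equivalently this row vector equals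
`[(1−ρ²)t₂/(t₂ − ρ²t₁), ρ(t₂ − t₁)/(t₂ − ρ²t₁)]`. -/
theorem fusion_weights_identity (ρ t₁ t₂ t : ℝ) (hρ0 : 0 ≤ ρ) (hρ1 : ρ < 1)
    (ht₁ : 0 < t₁) (h12 : t₁ < t₂) (h2t : t₂ ≤ t) :
    IsUnit (!![t₁, ρ * t₁; ρ * t₁, t₂] : Matrix (Fin 2) (Fin 2) ℝ) ∧
    (!![t₁, ρ * t₂] : Matrix (Fin 1) (Fin 2) ℝ) *
        (!![t₁, ρ * t₁; ρ * t₁, t₂] : Matrix (Fin 2) (Fin 2) ℝ)⁻¹ =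
      !![(1 - ρ ^ 2) * (t - (t - t₂)) / (t - (t - t₂) - ρ ^ 2 * (t - (t - t₁))),
         ρ * ((t - t₁) - (t - t₂)) / (t - (t - t₂) - ρ ^ 2 * (t - (t - t₁)))] ∧
    (!![t₁, ρ * t₂] : Matrix (Fin 1) (Fin 2) ℝ) *
        (!![t₁, ρ * t₁; ρ * t₁, t₂] : Matrix (Fin 2) (Fin 2) ℝ)⁻¹ =
      !![(1 - ρ ^ 2) * t₂ / (t₂ - ρ ^ 2 * t₁), ρ * (t₂ - t₁) / (t₂ - ρ ^ 2 * t₁)] := by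
  have hρ2 : ρ ^ 2 < 1 := by nlinarith
  have hd : t₂ - ρ ^ 2 * t₁ > 0 := by nlinarith
  have hdet : (!![t₁, ρ * t₁; ρ * t₁, t₂] : Matrix (Fin 2) (Fin 2) ℝ).det ≠ 0 := by
    simp only [Matrix.det_fin_two_of]
    nlinarith
  have hU : IsUnit (!![t₁, ρ * t₁; ρ * t₁, t₂] : Matrix (Fin 2) (Fin 2) ℝ) := by
    rw [Matrix.isUnit_iff_isUnit_det, isUnit_iff_ne_zero]
    exact hdet
  have key : (!![t₁, ρ * t₂] : Matrix (Fin 1) (Fin 2) ℝ) *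
      (!![t₁, ρ * t₁; ρ * t₁, t₂] : Matrix (Fin 2) (Fin 2) ℝ)⁻¹ =
      !![(1 - ρ ^ 2) * t₂ / (t₂ - ρ ^ 2 * t₁), ρ * (t₂ - t₁) / (t₂ - ρ ^ 2 * t₁)] := by
    rw [Matrix.inv_def, Matrix.adjugate_fin_two_of, Matrix.det_fin_two_of]
    have hne : t₁ * t₂ - t₁ ^ 2 * ρ ^ 2 ≠ 0 := by nlinarith
    have hne' : t₁ * t₂ - ρ * t₁ * (ρ * t₁) ≠ 0 := by nlinarith
    ext i j
    fin_cases i <;> fin_cases j <;>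
      simp [Matrix.mul_apply, Fin.sum_univ_two] <;>
      field_simp [hne, hne', hd.ne'] <;> ring
  refine ⟨hU, ?_, key⟩
  rw [key]
  congr 1 <;> ring
end

section
/- Let ρ ∈ [0,1) and 0 < t₂ ≤ t₁ ≤ t. Let Σ := [[t₁, ρ·t₂], [ρ·t₂, t₂]] and let v be the row vector [ρ·t₁, t₂]. Then Σ is invertible and t − v·Σ⁻¹·vᵀ = (t − t₂) − ρ²(t₁ − t₂)²/(t₁ − ρ²t₂). -/
open Matrix

/-- Conditional variance (MMSE) of the staler source (used in the expected MSE
formula ε(t)): for `ρ ∈ [0,1)` and `0 < t₂ ≤ t₁ ≤ t`, with covariance matrix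
`Σ = [[t₁, ρ t₂], [ρ t₂, t₂]]` of the samples and covariance vector `v = [ρ t₁, t₂]`
of `W_t^{(2)}` with the samples, `Σ` is invertible and
`t − v·Σ⁻¹·vᵀ = (t − t₂) − ρ²(t₁ − t₂)²/(t₁ − ρ²t₂)`. -/
theorem stale_source_mmse (ρ t₁ t₂ t : ℝ) (hρ0 : 0 ≤ ρ) (hρ1 : ρ < 1)
    (ht₂ : 0 < t₂) (h21 : t₂ ≤ t₁) (h1t : t₁ ≤ t) :
    IsUnit (!![t₁, ρ * t₂; ρ * t₂, t₂] : Matrix (Fin 2) (Fin 2) ℝ) ∧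
    t - ((!![ρ * t₁, t₂] : Matrix (Fin 1) (Fin 2) ℝ) *
          (!![t₁, ρ * t₂; ρ * t₂, t₂] : Matrix (Fin 2) (Fin 2) ℝ)⁻¹ *
          (!![ρ * t₁, t₂] : Matrix (Fin 1) (Fin 2) ℝ)ᵀ) 0 0 =
      (t - t₂) - ρ ^ 2 * (t₁ - t₂) ^ 2 / (t₁ - ρ ^ 2 * t₂) := by
  have hρ2 : ρ ^ 2 < 1 := by nlinarith
  have hd : 0 < t₁ - ρ ^ 2 * t₂ := by nlinarith
  have hdet : (!![t₁, ρ * t₂; ρ * t₂, t₂] : Matrix (Fin 2) (Fin 2) ℝ).det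
      = t₂ * (t₁ - ρ ^ 2 * t₂) := by
    simp [Matrix.det_fin_two_of]; ring
  have hdet0 : (!![t₁, ρ * t₂; ρ * t₂, t₂] : Matrix (Fin 2) (Fin 2) ℝ).det ≠ 0 := by
    rw [hdet]; positivity
  refine ⟨(Matrix.isUnit_iff_isUnit_det _).2 (isUnit_iff_ne_zero.2 hdet0), ?_⟩
  rw [Matrix.inv_def]
  rw [hdet, Ring.inverse_eq_inv]
  simp only [Matrix.adjugate_fin_two_of, hdet, Matrix.mul_apply, Fin.sum_univ_two,
    Matrix.smul_apply, Matrix.transpose_apply, Matrix.cons_val', Matrix.cons_val_zero,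
    Matrix.cons_val_one, Matrix.head_cons, Matrix.empty_val', Matrix.cons_val_fin_one,
    Matrix.head_fin_const, smul_eq_mul, Matrix.of_apply]
  have h1 : t₂ * (t₁ - ρ ^ 2 * t₂) ≠ 0 := by positivity
  field_simp
  ring
end

section
/- Let ρ ∈ [0,1), let S₁, S₂ ≥ 0 with M := max{S₁, S₂} > 0, let Y_prev ≥ 0 and Z ≥ 0 be real numbers, and set D := M + Y_prev. Let Y be a nonnegative random variable on a probability space (Ω, F, P) with E[Y] = μ and E[Y²] = σ (both finite). Define ε(t) := (t − S₁) + (t − S₂) − ρ²(S₁ − S₂)²/(max{S₁, S₂} − ρ²·min{S₁, S₂}) and q_ρ(S₁, S₂) := |S₁ − S₂|·(1 − ρ²|S₁ − S₂|/(max{S₁, S₂} − ρ²·min{S₁, S₂})). Then E[ ∫_{D}^{D + Y + Z} ε(t) dt ] = σ + μ·Z + (Z + μ)·(2·Y_prev + Z + q_ρ(S₁, S₂)). -/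
open MeasureTheory

lemma interval_linear (K a b : ℝ) :
    ∫ t in a..b, (2 * t - K) = (b ^ 2 - a ^ 2) - K * (b - a) := by
  have h1 : IntervalIntegrable (fun t : ℝ => 2 * t) MeasureTheory.volume a b :=
    (continuous_const.mul continuous_id).intervalIntegrable a b
  have h2 : IntervalIntegrable (fun _ : ℝ => K) MeasureTheory.volume a b :=
    intervalIntegrable_const
  rw [intervalIntegral.integral_sub h1 h2, intervalIntegral.integral_const_mul,
    integral_id, intervalIntegral.integral_const]
  simp [smul_eq_mul]
  ring

/-- Equation (21) of the paper: the expected MSE accumulated over one update interval.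
With last sampling times `S₁, S₂` (with `max{S₁,S₂} > 0`), previous delay `Y_prev`,
delivery time `D = max{S₁,S₂} + Y_prev`, waiting time `Z ≥ 0`, and a nonnegative random
next delay `Y` with `E[Y] = μ`, `E[Y²] = σ`, the expectation of
`∫_D^{D+Y+Z} ε(t) dt` equals `σ + μZ + (Z + μ)(2 Y_prev + Z + q_ρ(S₁, S₂))`, where
`ε(t) = (t − S₁) + (t − S₂) − ρ²(S₁ − S₂)²/(max{S₁,S₂} − ρ² min{S₁,S₂})` and
`q_ρ(S₁,S₂) = |S₁ − S₂|·(1 − ρ²|S₁ − S₂|/(max{S₁,S₂} − ρ² min{S₁,S₂}))`. -/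
theorem expected_interval_mse {Ω : Type*} [MeasurableSpace Ω]
    (P : Measure Ω) [IsProbabilityMeasure P]
    (ρ S₁ S₂ Yprev Z μ σ : ℝ) (hρ0 : 0 ≤ ρ) (hρ1 : ρ < 1)
    (hS₁ : 0 ≤ S₁) (hS₂ : 0 ≤ S₂) (hmax : 0 < max S₁ S₂)
    (hYprev : 0 ≤ Yprev) (hZ : 0 ≤ Z)
    (Y : Ω → ℝ) (hYmeas : Measurable Y) (hYnonneg : ∀ ω, 0 ≤ Y ω)
    (hYint : Integrable Y P) (hY2int : Integrable (fun ω => (Y ω) ^ 2) P)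
    (hμ : ∫ ω, Y ω ∂P = μ) (hσ : ∫ ω, (Y ω) ^ 2 ∂P = σ) :
    ∫ ω, (∫ t in (max S₁ S₂ + Yprev)..(max S₁ S₂ + Yprev + Y ω + Z),
        ((t - S₁) + (t - S₂) -
          ρ ^ 2 * (S₁ - S₂) ^ 2 / (max S₁ S₂ - ρ ^ 2 * min S₁ S₂))) ∂P =
      σ + μ * Z + (Z + μ) * (2 * Yprev + Z +
        |S₁ - S₂| * (1 - ρ ^ 2 * |S₁ - S₂| / (max S₁ S₂ - ρ ^ 2 * min S₁ S₂))) := by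
  set M := max S₁ S₂ with hM
  set C := ρ ^ 2 * (S₁ - S₂) ^ 2 / (M - ρ ^ 2 * min S₁ S₂) with hC
  set D := M + Yprev with hD
  set K := S₁ + S₂ + C with hK
  -- inner integral closed form
  have hinner : ∀ ω, (∫ t in D..(D + Y ω + Z),
      ((t - S₁) + (t - S₂) - C)) =
      (Y ω) ^ 2 + (2 * Z + (2 * D - K)) * Y ω + (Z ^ 2 + (2 * D - K) * Z) := by
    intro ω
    have heq : (fun t : ℝ => (t - S₁) + (t - S₂) - C) = fun t => 2 * t - K := by
      funext t; rw [hK]; ring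
    rw [heq, interval_linear]
    ring
  simp only [hinner]
  have hconst : Integrable (fun _ : Ω => Z ^ 2 + (2 * D - K) * Z) P := integrable_const _
  have hlin : Integrable (fun ω => (2 * Z + (2 * D - K)) * Y ω) P := hYint.const_mul _
  have hfg : Integrable (fun ω => Y ω ^ 2 + (2 * Z + (2 * D - K)) * Y ω) P :=
    hY2int.add hlin
  rw [integral_add hfg hconst, integral_add hY2int hlin,
    integral_const_mul, hσ, hμ, integral_const]
  simp only [probReal_univ, measure_univ, ENNReal.toReal_one, smul_eq_mul, one_mul]
  -- algebraic identity
  have habs : 2 * M - S₁ - S₂ = |S₁ - S₂| := by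
    rcases le_total S₁ S₂ with h | h
    · rw [hM, max_eq_right h, abs_sub_comm, abs_of_nonneg (by linarith)]; ring
    · rw [hM, max_eq_left h, abs_of_nonneg (by linarith)]; ring
  have hCq : |S₁ - S₂| * (ρ ^ 2 * |S₁ - S₂| / (M - ρ ^ 2 * min S₁ S₂)) = C := by
    rw [hC, mul_comm, div_mul_eq_mul_div, mul_assoc, ← sq, sq_abs]
  rw [hK, hD]
  linear_combination (Z + μ) * habs - (Z + μ) * hCq + 2 * ρ ^ 2 * (M - ρ ^ 2 * (S₁ ⊓ S₂))⁻¹ * (Z + μ) * (sq_abs (S₁ - S₂))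
end
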